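/- arXiv:1911.04696 — 2 statements merged into one kernel-verified Lean document; each statement's English description precedes it below -/
import Mathlib

section
/- Let (Ω, F, P) be a probability space and, for each n, let A_n, B_n, Ã_n, B̃_n be measurable events with Ã_n ⊆ A_n and B̃_n ⊆ B_n; set E_n = Ã_n ∪ B̃_n. Assume: (i) P(A_n) → p_A and P(B_n) → p_B as n → ∞; (ii) liminf_{n→∞} [ P(A_nᶜ ∩ B̃_n) − P(A_n ∩ Ã_nᶜ ∩ B̃_nᶜ) ] > 0; and (iii) limsup_{n→∞} [ P(B_nᶜ ∩ Ã_n) − P(B_n ∩ B̃_nᶜ ∩ Ã_nᶜ) ] < 0. Then liminf_{n→∞} P(E_n) > p_A and limsup_{n→∞} P(E_n) < p_B. (This is the paper's Theorem 1 stated in event form: the global power of the EMinP test is asymptotically strictly between the global powers of the two component tests, i.e., EMinP has a more balanced global power.) -/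
open MeasureTheory Filter Set

lemma key_id {Ω : Type*} [MeasurableSpace Ω] (P : Measure Ω) [IsFiniteMeasure P]
    {A Atil Btil : Set Ω} (hA : MeasurableSet A) (hAtil : MeasurableSet Atil)
    (hBtil : MeasurableSet Btil) (hsub : Atil ⊆ A) :
    (P (Atil ∪ Btil)).toReal
      = (P A).toReal + (P (Aᶜ ∩ Btil)).toReal - (P (A ∩ Atilᶜ ∩ Btilᶜ)).toReal := by
  set E := Atil ∪ Btil with hE
  have hEm : MeasurableSet E := hAtil.union hBtil
  have h1 : P (E ∩ A) + P (E \ A) = P E := measure_inter_add_diff E hA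
  have h2 : P (A ∩ E) + P (A \ E) = P A := measure_inter_add_diff A hEm
  have e1 : E \ A = Aᶜ ∩ Btil := by
    ext x; simp only [hE, mem_diff, mem_union, mem_inter_iff, mem_compl_iff]
    constructor
    · rintro ⟨h | h, hna⟩
      · exact absurd (hsub h) hna
      · exact ⟨hna, h⟩
    · rintro ⟨hna, h⟩; exact ⟨Or.inr h, hna⟩
  have e2 : A \ E = A ∩ Atilᶜ ∩ Btilᶜ := by
    ext x; simp only [hE, mem_diff, mem_union, mem_inter_iff, mem_compl_iff]
    tauto
  have e3 : E ∩ A = A ∩ E := Set.inter_comm _ _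
  rw [e1] at h1
  rw [e2] at h2
  rw [e3] at h1
  have f1 : P (A ∩ E) ≠ ⊤ := measure_ne_top _ _
  have f2 : P (Aᶜ ∩ Btil) ≠ ⊤ := measure_ne_top _ _
  have f3 : P (A ∩ Atilᶜ ∩ Btilᶜ) ≠ ⊤ := measure_ne_top _ _
  have r1 : (P (A ∩ E)).toReal + (P (Aᶜ ∩ Btil)).toReal = (P E).toReal := by
    rw [← ENNReal.toReal_add f1 f2, h1]
  have r2 : (P (A ∩ E)).toReal + (P (A ∩ Atilᶜ ∩ Btilᶜ)).toReal = (P A).toReal := by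
    rw [← ENNReal.toReal_add f1 f3, h2]
  linarith

/-- Theorem 1 (event form): the global power of the EMinP test `E_n = Ã_n ∪ B̃_n` is
asymptotically strictly between the global powers `p_A` and `p_B` of the two
component tests. -/
theorem stmt7 {Ω : Type*} [MeasurableSpace Ω] (P : Measure Ω) [IsProbabilityMeasure P]
    (A B Atil Btil : ℕ → Set Ω)
    (hA : ∀ n, MeasurableSet (A n)) (hB : ∀ n, MeasurableSet (B n))
    (hAtil : ∀ n, MeasurableSet (Atil n)) (hBtil : ∀ n, MeasurableSet (Btil n))
    (hAsub : ∀ n, Atil n ⊆ A n) (hBsub : ∀ n, Btil n ⊆ B n)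
    (pA pB : ℝ)
    (hpA : Tendsto (fun n => (P (A n)).toReal) atTop (nhds pA))
    (hpB : Tendsto (fun n => (P (B n)).toReal) atTop (nhds pB))
    (hii : 0 < Filter.liminf
      (fun n => (P ((A n)ᶜ ∩ Btil n)).toReal - (P (A n ∩ (Atil n)ᶜ ∩ (Btil n)ᶜ)).toReal)
      atTop)
    (hiii : Filter.limsup
      (fun n => (P ((B n)ᶜ ∩ Atil n)).toReal - (P (B n ∩ (Btil n)ᶜ ∩ (Atil n)ᶜ)).toReal)
      atTop < 0) :
    pA < Filter.liminf (fun n => (P (Atil n ∪ Btil n)).toReal) atTop ∧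
    Filter.limsup (fun n => (P (Atil n ∪ Btil n)).toReal) atTop < pB := by
  set g : ℕ → ℝ := fun n =>
    (P ((A n)ᶜ ∩ Btil n)).toReal - (P (A n ∩ (Atil n)ᶜ ∩ (Btil n)ᶜ)).toReal with hg
  set h : ℕ → ℝ := fun n =>
    (P ((B n)ᶜ ∩ Atil n)).toReal - (P (B n ∩ (Btil n)ᶜ ∩ (Atil n)ᶜ)).toReal with hh
  have keyA : ∀ n, (P (Atil n ∪ Btil n)).toReal = (P (A n)).toReal + g n := by
    intro n
    have := key_id P (hA n) (hAtil n) (hBtil n) (hAsub n)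
    simp only [hg]; linarith
  have keyB : ∀ n, (P (Atil n ∪ Btil n)).toReal = (P (B n)).toReal + h n := by
    intro n
    have := key_id P (hB n) (hBtil n) (hAtil n) (hBsub n)
    rw [Set.union_comm]
    simp only [hh]; linarith
  -- bounds
  have hub : ∀ (s : Set Ω), (P s).toReal ≤ 1 := fun s => by
    have := prob_le_one (μ := P) (s := s)
    simpa using ENNReal.toReal_le_of_le_ofReal one_pos.le (by simpa using this)
  have hlb : ∀ (s : Set Ω), 0 ≤ (P s).toReal := fun s => ENNReal.toReal_nonneg
  have hgbd : IsBoundedUnder (· ≥ ·) atTop g := isBoundedUnder_of ⟨-1, fun n => by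
    simp only [hg]; have := hub (A n ∩ (Atil n)ᶜ ∩ (Btil n)ᶜ); have := hlb ((A n)ᶜ ∩ Btil n); linarith⟩
  have hhbd : IsBoundedUnder (· ≤ ·) atTop h := isBoundedUnder_of ⟨1, fun n => by
    simp only [hh]; have := hub ((B n)ᶜ ∩ Atil n); have := hlb (B n ∩ (Btil n)ᶜ ∩ (Atil n)ᶜ); linarith⟩
  have hEub : IsBoundedUnder (· ≤ ·) atTop (fun n => (P (Atil n ∪ Btil n)).toReal) :=
    isBoundedUnder_of ⟨1, fun n => hub _⟩
  have hElb : IsBoundedUnder (· ≥ ·) atTop (fun n => (P (Atil n ∪ Btil n)).toReal) :=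
    isBoundedUnder_of ⟨0, fun n => hlb _⟩
  constructor
  · obtain ⟨c, hc0, hcl⟩ := exists_between hii
    have hev : ∀ᶠ n in atTop, c < g n := eventually_lt_of_lt_liminf hcl hgbd
    have hev2 : ∀ᶠ n in atTop, (P (A n)).toReal + c ≤ (P (Atil n ∪ Btil n)).toReal := by
      filter_upwards [hev] with n hn
      rw [keyA n]; linarith
    have hlim : Tendsto (fun n => (P (A n)).toReal + c) atTop (nhds (pA + c)) :=
      hpA.add_const c
    have h1 : pA + c ≤ Filter.liminf (fun n => (P (Atil n ∪ Btil n)).toReal) atTop := by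
      have := liminf_le_liminf hev2 hlim.isBoundedUnder_ge hEub.isCoboundedUnder_ge
      rwa [hlim.liminf_eq] at this
    linarith
  · obtain ⟨c, hcl, hc0⟩ := exists_between hiii
    have hev : ∀ᶠ n in atTop, h n < c := eventually_lt_of_limsup_lt hcl hhbd
    have hev2 : ∀ᶠ n in atTop, (P (Atil n ∪ Btil n)).toReal ≤ (P (B n)).toReal + c := by
      filter_upwards [hev] with n hn
      rw [keyB n]; linarith
    have hlim : Tendsto (fun n => (P (B n)).toReal + c) atTop (nhds (pB + c)) :=
      hpB.add_const c
    have h1 : Filter.limsup (fun n => (P (Atil n ∪ Btil n)).toReal) atTop ≤ pB + c := by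
      have := limsup_le_limsup hev2 hElb.isCoboundedUnder_le hlim.isBoundedUnder_le
      rwa [hlim.limsup_eq] at this
    linarith
end

section
/- Let (Ω, F, P) be a probability space and (W_n), (Ĉ_n) real-valued random variables such that the laws of W_n converge weakly to a probability measure with CDF H that is continuous on ℝ and strictly increasing where it takes values in (0,1), and Ĉ_n converges in probability to the point q with H(q) = α for a fixed α ∈ (0,1). Let (B_n) be measurable events with liminf_{n→∞} P( {W_n ≤ Ĉ_n} ∩ B_nᶜ ) > 0. Then limsup_{n→∞} P( {W_n ≤ Ĉ_n} ∩ B_n ) < α. (This is the paper's Theorem 2 for the procedure φ_{e(3)}: the familywise error rate of the EMinP procedure that requires both the MinP test and the global test to reject is asymptotically strictly below α.) -/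
open MeasureTheory Filter Set OmegaCompletePartialOrder


lemma stmt12_tsum_iSup_mono {g : ℕ → ℕ → ENNReal} (hg : Monotone g) :
    ∑' i, ⨆ k, g k i = ⨆ k, ∑' i, g k i := by
  rw [← lintegral_count]
  simp_rw [← lintegral_count (g _)]
  exact lintegral_iSup (fun k => measurable_of_countable _) (fun a b hab i => hg hab i)

lemma stmt12_chain_iSup_apply {α : Type*} [MeasurableSpace α] (c : ℕ → Measure α)
    (hc : Monotone c) {s : Set α} (hs : MeasurableSet s) : (⨆ k, c k) s = ⨆ k, c k s := by
  let ν : Measure α := Measure.ofMeasurable (fun s _ => ⨆ k, c k s)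
    (by simp)
    (by
      intro f hf hdisj
      have h1 : ∀ k, c k (⋃ i, f i) = ∑' i, c k (f i) := fun k => measure_iUnion hdisj hf
      simp_rw [h1]
      exact (stmt12_tsum_iSup_mono (fun a b hab i => hc hab (f i))).symm)
  have hν : ∀ t (_ : MeasurableSet t), ν t = ⨆ k, c k t := fun t ht =>
    Measure.ofMeasurable_apply t ht
  have heq : (⨆ k, c k) = ν := by
    apply le_antisymm
    · exact iSup_le fun k => Measure.le_iff.2 fun t ht => by
        rw [hν t ht]; exact le_iSup (fun k => c k t) k
    · exact Measure.le_iff.2 fun t ht => by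
        rw [hν t ht]
        exact iSup_le fun k => Measure.le_iff'.mp (le_iSup c k) t
  rw [heq, hν s hs]

/-- Theorem 2 for `φ_{e(3)}`: the FWER of the EMinP procedure requiring both the MinP
test and the global test to reject is asymptotically strictly below `α`. -/
theorem stmt12 {Ω : Type*} [MeasurableSpace Ω] (P : Measure Ω) [IsProbabilityMeasure P]
    (W : ℕ → Ω → ℝ) (hW : ∀ n, Measurable (W n))
    (C : ℕ → Ω → ℝ) (hCmeas : ∀ n, Measurable (C n))
    (μ : ProbabilityMeasure ℝ)
    (hconv : Tendsto (β := ProbabilityMeasure ℝ)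
      (fun n => (⟨P.map (W n), Measure.isProbabilityMeasure_map (hW n).aemeasurable⟩ :
        ProbabilityMeasure ℝ)) atTop (nhds μ))
    (H : ℝ → ℝ) (hHdef : ∀ t, H t = ((μ : Measure ℝ) (Set.Iic t)).toReal)
    (hHcont : Continuous H)
    (hHmono : StrictMonoOn H {t | H t ∈ Set.Ioo (0 : ℝ) 1})
    (α : ℝ) (hα : α ∈ Set.Ioo (0 : ℝ) 1)
    (q : ℝ) (hq : H q = α)
    (hC : ∀ ε > (0 : ℝ), Tendsto (fun n => P {ω | ε < |C n ω - q|}) atTop (nhds 0))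
    (B : ℕ → Set Ω) (hB : ∀ n, MeasurableSet (B n))
    (hliminf : 0 < Filter.liminf
      (fun n => (P ({ω | W n ω ≤ C n ω} ∩ (B n)ᶜ)).toReal) atTop) :
    Filter.limsup (fun n => (P ({ω | W n ω ≤ C n ω} ∩ B n)).toReal) atTop < α := by
  set L := Filter.liminf (fun n => (P ({ω | W n ω ≤ C n ω} ∩ (B n)ᶜ)).toReal) atTop with hL
  obtain ⟨δ, hδpos, hδL⟩ : ∃ δ : ℝ, 0 < δ ∧ δ < L := ⟨L/2, by linarith, by linarith⟩
  -- eventually the complement part is at least δ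
  have hcev : ∀ᶠ n in atTop, δ < (P ({ω | W n ω ≤ C n ω} ∩ (B n)ᶜ)).toReal :=
    eventually_lt_of_lt_liminf hδL
      (isBoundedUnder_of ⟨0, fun n => ENNReal.toReal_nonneg⟩)
  -- choose ε with H (q+ε) < α + δ/4
  obtain ⟨ε, hεpos, hHε⟩ : ∃ ε : ℝ, 0 < ε ∧ H (q + ε) < α + δ/4 := by
    have h1 : ∀ᶠ x in nhds q, H x < α + δ/4 :=
      (hHcont.tendsto q).eventually_lt_const (by rw [hq]; linarith)
    rw [Metric.eventually_nhds_iff] at h1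
    obtain ⟨r, hr, hball⟩ := h1
    refine ⟨r/2, by linarith, hball ?_⟩
    rw [Real.dist_eq, abs_of_pos (by linarith)]
    linarith
  -- from Scott-topology convergence, get a lower bound on upper-tail masses
  have hval := ProbabilityMeasure.le_liminf_measure_open_of_tendsto hconv
    (isOpen_Ioi (a := q + ε))
  -- complement identity for probability measures
  have hcompl : ∀ (ρ : Measure ℝ), IsProbabilityMeasure ρ → ∀ t : ℝ,
      (ρ (Set.Iic t)).toReal = 1 - (ρ (Set.Ioi t)).toReal := by
    intro ρ hρ t
    have h := measure_add_measure_compl (μ := ρ) (measurableSet_Iic (a := t))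
    rw [Set.compl_Iic] at h
    have := congrArg ENNReal.toReal h
    rw [ENNReal.toReal_add (measure_ne_top _ _) (measure_ne_top _ _)] at this
    simp at this
    linarith
  set g : ℝ := ((μ : Measure ℝ) (Set.Ioi (q + ε))).toReal with hg
  have hHg : H (q + ε) = 1 - g := by
    rw [hHdef, hcompl (μ : Measure ℝ) μ.2 (q + ε)]
  -- eventually P(W_n ≤ q + ε) ≤ H(q+ε) + δ/4
  have haev : ∀ᶠ n in atTop,
      (P {ω | W n ω ≤ q + ε}).toReal ≤ H (q + ε) + δ/4 := by
    have hmapIic : ∀ n, P.map (W n) (Set.Iic (q + ε)) = P {ω | W n ω ≤ q + ε} := fun n => by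
      rw [Measure.map_apply (hW n) measurableSet_Iic]; rfl
    rcases le_or_gt g (δ/4) with hcase | hcase
    · refine Eventually.of_forall fun n => ?_
      have hP : (P {ω | W n ω ≤ q + ε}).toReal ≤ 1 :=
        ENNReal.toReal_le_of_le_ofReal one_pos.le (by simpa using prob_le_one)
      rw [hHg]; linarith
    · set r : ENNReal := (μ : Measure ℝ) (Set.Ioi (q + ε)) - ENNReal.ofReal (δ/4) with hrdef
      have hμG : (μ : Measure ℝ) (Set.Ioi (q + ε)) ≠ 0 := by
        intro h0
        rw [hg, h0] at hcase
        simp at hcase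
        linarith
      have hle : ENNReal.ofReal (δ/4) ≤ (μ : Measure ℝ) (Set.Ioi (q + ε)) := by
        rw [← ENNReal.ofReal_toReal (measure_ne_top _ _), ← hg]
        exact ENNReal.ofReal_le_ofReal hcase.le
      have hr : r < (μ : Measure ℝ) (Set.Ioi (q + ε)) :=
        ENNReal.sub_lt_self (measure_ne_top _ _) hμG (by simp; linarith)
      have hev : ∀ᶠ n in atTop, r < P.map (W n) (Set.Ioi (q + ε)) :=
        eventually_lt_of_lt_liminf (lt_of_lt_of_le hr hval)
      filter_upwards [hev] with n hn
      have hprob : IsProbabilityMeasure (P.map (W n)) :=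
        Measure.isProbabilityMeasure_map (hW n).aemeasurable
      have hrr : r.toReal = g - δ/4 := by
        rw [hrdef, ENNReal.toReal_sub_of_le hle (measure_ne_top _ _), ← hg,
          ENNReal.toReal_ofReal (by linarith)]
      have hlow : g - δ/4 ≤ (P.map (W n) (Set.Ioi (q + ε))).toReal := by
        rw [← hrr]
        exact ENNReal.toReal_mono (measure_ne_top _ _) hn.le
      have hiic := hcompl (P.map (W n)) hprob (q + ε)
      rw [hmapIic n] at hiic
      rw [hiic, hHg]
      linarith
  -- the C-deviation part is eventually small
  have hbev : ∀ᶠ n in atTop, (P {ω | ε < |C n ω - q|}).toReal < δ/4 := by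
    have h0 : Tendsto (fun n => (P {ω | ε < |C n ω - q|}).toReal) atTop (nhds 0) :=
      (ENNReal.tendsto_toReal (by simp)).comp (hC ε hεpos)
    exact h0.eventually_lt_const (by linarith)
  -- combine
  have key : ∀ᶠ n in atTop,
      (P ({ω | W n ω ≤ C n ω} ∩ B n)).toReal ≤ α - δ/4 := by
    filter_upwards [hcev, haev, hbev] with n hc ha hb
    set A := {ω | W n ω ≤ C n ω}
    have hsplit : P (A ∩ B n) + P (A \ B n) = P A := measure_inter_add_diff A (hB n)
    have hsub : A ⊆ {ω | W n ω ≤ q + ε} ∪ {ω | ε < |C n ω - q|} := by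
      intro ω hω
      rcases le_or_gt (|C n ω - q|) ε with h | h
      · left
        have h2 : C n ω - q ≤ ε := (abs_le.mp h).2
        have hω' : W n ω ≤ C n ω := hω
        show W n ω ≤ q + ε
        linarith
      · right; exact h
    have hA : P A ≤ P {ω | W n ω ≤ q + ε} + P {ω | ε < |C n ω - q|} :=
      le_trans (measure_mono hsub) (measure_union_le _ _)
    have hsplit' : (P (A ∩ B n)).toReal + (P (A \ B n)).toReal = (P A).toReal := by
      rw [← ENNReal.toReal_add (measure_ne_top _ _) (measure_ne_top _ _), hsplit]
    have hA' : (P A).toReal ≤ (P {ω | W n ω ≤ q + ε}).toReal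
        + (P {ω | ε < |C n ω - q|}).toReal := by
      rw [← ENNReal.toReal_add (measure_ne_top _ _) (measure_ne_top _ _)]
      exact ENNReal.toReal_mono (by finiteness) hA
    have hdiff : A \ B n = A ∩ (B n)ᶜ := rfl
    rw [hdiff] at hsplit'
    linarith
  calc Filter.limsup (fun n => (P ({ω | W n ω ≤ C n ω} ∩ B n)).toReal) atTop
      ≤ α - δ/4 := limsup_le_of_le
        (isCoboundedUnder_le_of_le atTop (fun n => ENNReal.toReal_nonneg)) key
    _ < α := by linarith
end
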